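/- If f : X → Y is a relative n-dimensional hypergroupoid of simplicial sets, then the map Dec_+(X) → Dec_+(Y) ×_{Y_0} X_0 (where Y_0, X_0 denote constant simplicial sets and the maps Dec_+ → (-)_0 are the retractions ∂_0^{•+1}) is a trivial relative n-dimensional hypergroupoid. -/

import Mathlib

open CategoryTheory Simplicial CategoryTheory.Limits

namespace DecShift

/-- The underlying function of the shift of a morphism of `SimplexCategory`:
extend by sending the new top element to the new top element. -/
def shiftFun {x y : SimplexCategory} (φ : x ⟶ y) : Fin (x.len + 2) → Fin (y.len + 2) :=
  Fin.lastCases (Fin.last _) (fun i => (φ.toOrderHom i).castSucc)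

lemma shiftFun_castSucc {x y : SimplexCategory} (φ : x ⟶ y) (i : Fin (x.len + 1)) :
    shiftFun φ i.castSucc = (φ.toOrderHom i).castSucc := by
  simp [shiftFun]

lemma shiftFun_last {x y : SimplexCategory} (φ : x ⟶ y) :
    shiftFun φ (Fin.last _) = Fin.last _ := by
  simp [shiftFun]

lemma shiftFun_monotone {x y : SimplexCategory} (φ : x ⟶ y) :
    Monotone (shiftFun φ) := by
  intro i j hij
  induction i using Fin.lastCases with
  | last =>
    have hj : j = Fin.last _ := le_antisymm (Fin.le_last _) hij
    subst hj
    rw [shiftFun_last]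
  | cast i =>
    induction j using Fin.lastCases with
    | last =>
      rw [shiftFun_last]
      exact Fin.le_last _
    | cast j =>
      rw [shiftFun_castSucc, shiftFun_castSucc]
      exact Fin.castSucc_le_castSucc_iff.mpr
        (φ.toOrderHom.monotone (Fin.castSucc_le_castSucc_iff.mp hij))

/-- The shift functor `[n] ↦ [n+1]` on the simplex category. -/
def shiftF : SimplexCategory ⥤ SimplexCategory where
  obj x := SimplexCategory.mk (x.len + 1)
  map φ := SimplexCategory.Hom.mk ⟨shiftFun φ, shiftFun_monotone φ⟩
  map_id := by
    intro x
    apply SimplexCategory.Hom.ext'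
    apply OrderHom.ext
    funext i
    induction i using Fin.lastCases with
    | last =>
      show shiftFun (𝟙 x) (Fin.last (x.len + 1)) = Fin.last (x.len + 1)
      rw [shiftFun_last]
    | cast i =>
      show shiftFun (𝟙 x) i.castSucc = i.castSucc
      rw [shiftFun_castSucc]
      rfl
  map_comp := by
    intro x y z φ ψ
    apply SimplexCategory.Hom.ext'
    apply OrderHom.ext
    funext i
    induction i using Fin.lastCases with
    | last =>
      show shiftFun (φ ≫ ψ) (Fin.last (x.len + 1)) =
        shiftFun ψ (shiftFun φ (Fin.last (x.len + 1)))
      rw [shiftFun_last, shiftFun_last, shiftFun_last]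
    | cast i =>
      show shiftFun (φ ≫ ψ) i.castSucc = shiftFun ψ (shiftFun φ i.castSucc)
      rw [shiftFun_castSucc, shiftFun_castSucc, shiftFun_castSucc]
      rfl

/-- The décalage functor on simplicial sets, `Dec₊(X)_n = X_{n+1}`, forgetting the
last face and degeneracy. -/
def dec : SSet.{0} ⥤ SSet.{0} :=
  (CategoryTheory.Functor.whiskeringLeft _ _ _).obj shiftF.op

/-- The constant simplicial set on the set of `0`-simplices of `X`. -/
def constAt (X : SSet.{0}) : SSet.{0} :=
  (Functor.const SimplexCategoryᵒᵖ).obj (X.obj (Opposite.op (SimplexCategory.mk 0)))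

lemma to0_unique {a : SimplexCategory} (f g : a ⟶ SimplexCategory.mk 0) : f = g := by
  apply SimplexCategory.Hom.ext'
  apply OrderHom.ext
  funext i
  apply Fin.ext
  have h1 := (f.toOrderHom i).isLt
  have h2 := (g.toOrderHom i).isLt
  simp only [SimplexCategory.len_mk] at h1 h2
  omega

/-- The retraction `Dec₊(X) → X_0`, given in level `n` by the iterated face map
`(∂_0)^{n+1} : X_{n+1} → X_0` (evaluation at the last vertex). -/
def rMap (X : SSet.{0}) : dec.obj X ⟶ constAt X where
  app m := X.map (SimplexCategory.const (SimplexCategory.mk 0)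
    (SimplexCategory.mk (m.unop.len + 1)) (Fin.last _)).op
  naturality := by
    intro a b ψ
    show X.map ((shiftF.map ψ.unop).op) ≫ X.map _ = X.map _ ≫ 𝟙 _
    rw [Category.comp_id]
    erw [← X.map_comp]
    apply congrArg X.map
    apply Quiver.Hom.unop_inj
    exact (congrArg (SimplexCategory.const (SimplexCategory.mk 0)
        (SimplexCategory.mk (a.unop.len + 1))) (shiftFun_last ψ.unop))

/-- The map of constant simplicial sets induced by `f` on `0`-simplices. -/
def constMap {X Y : SSet.{0}} (f : X ⟶ Y) : constAt X ⟶ constAt Y where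
  app _ := f.app (Opposite.op (SimplexCategory.mk 0))

lemma rMap_natural {X Y : SSet.{0}} (f : X ⟶ Y) :
    dec.map f ≫ rMap Y = rMap X ≫ constMap f := by
  apply NatTrans.ext
  funext m
  ext x
  exact (NatTrans.naturality_apply f
    (SimplexCategory.const (SimplexCategory.mk 0)
      (SimplexCategory.mk (m.unop.len + 1)) (Fin.last _)).op x).symm

end DecShift

open DecShift

def RelTarget {X Y A B : SSet} (f : X ⟶ Y) (i : A ⟶ B) : Type _ :=
  {p : (A ⟶ X) × (B ⟶ Y) // p.1 ≫ f = i ≫ p.2}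

def relMatch {X Y A B : SSet} (f : X ⟶ Y) (i : A ⟶ B) (g : B ⟶ X) : RelTarget f i :=
  ⟨(i ≫ g, g ≫ f), Category.assoc i g f⟩

/-- A relative `n`-dimensional hypergroupoid: a Kan fibration whose relative partial
matching maps are bijective in all levels `m > n`. -/
def IsRelHypergroupoid (n : ℕ) {X Y : SSet} (f : X ⟶ Y) : Prop :=
  (∀ (m : ℕ) (k : Fin (m + 1)),
      Function.Surjective (relMatch f ((SSet.horn m k).ι))) ∧
    ∀ (m : ℕ) (k : Fin (m + 1)), m > n →
      Function.Bijective (relMatch f ((SSet.horn m k).ι))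

/-- A trivial relative `n`-dimensional hypergroupoid: a trivial Kan fibration whose
relative matching maps are bijective in all levels `m ≥ n`. -/
def IsTrivRelHypergroupoid (n : ℕ) {X Y : SSet} (f : X ⟶ Y) : Prop :=
  (∀ m : ℕ, Function.Surjective (relMatch f ((SSet.boundary m).ι))) ∧
    ∀ m : ℕ, m ≥ n → Function.Bijective (relMatch f ((SSet.boundary m).ι))

/-- The canonical comparison map `Dec₊(X) ⟶ Dec₊(Y) ×_{Y_0} X_0` over the
retractions given by iterated `0`-th face maps. -/
noncomputable def decComparison₀ {X Y : SSet.{0}} (f : X ⟶ Y) :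
    dec.obj X ⟶ pullback (rMap Y) (constMap f) :=
  pullback.lift (dec.map f) (rMap X) (rMap_natural f)

namespace DecProof
open DecShift SSet SimplexCategory Finset Opposite

/-! ### Counting the sub-top part of a monotone map -/

/-- The number of indices whose value is below the top. -/
def cnt {k m : ℕ} (φ : Fin (k + 1) →o Fin (m + 2)) : ℕ :=
  #(Finset.univ.filter (fun i => φ i ≠ Fin.last (m + 1)))

lemma lt_cnt_iff {k m : ℕ} (φ : Fin (k + 1) →o Fin (m + 2)) (i : Fin (k + 1)) :
    i.1 < cnt φ ↔ φ i ≠ Fin.last (m + 1) := by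
  have hdc : ∀ i j : Fin (k+1), j ≤ i → φ i ≠ Fin.last (m+1) → φ j ≠ Fin.last (m+1) := by
    intro i j hji hi hj
    exact hi (le_antisymm (Fin.le_last _) (hj ▸ φ.monotone hji))
  constructor
  · intro h
    by_contra hlast
    have hsub : (Finset.univ.filter (fun i => φ i ≠ Fin.last (m + 1))) ⊆ Finset.Iio i := by
      intro j hj
      simp only [mem_filter] at hj
      simp only [Finset.mem_Iio]
      by_contra hij
      exact (hdc j i (le_of_not_gt hij) hj.2) hlast
    have := Finset.card_le_card hsub
    rw [Fin.card_Iio] at this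
    unfold cnt at h
    omega
  · intro h
    have hsub : Finset.Iic i ⊆ (Finset.univ.filter (fun i => φ i ≠ Fin.last (m + 1))) := by
      intro j hj
      simp only [Finset.mem_Iic] at hj
      exact Finset.mem_filter.mpr ⟨Finset.mem_univ _, hdc i j hj h⟩
    have := Finset.card_le_card hsub
    rw [Fin.card_Iic] at this
    unfold cnt
    omega

lemma cnt_le {k m : ℕ} (φ : Fin (k + 1) →o Fin (m + 2)) : cnt φ ≤ k + 1 := by
  have := Finset.card_filter_le Finset.univ (fun i => φ i ≠ Fin.last (m + 1))
  simpa [cnt] using this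

lemma eq_last_of_cnt {k m : ℕ} {φ : Fin (k + 1) →o Fin (m + 2)} {i : Fin (k + 1)}
    (h : cnt φ ≤ i.1) : φ i = Fin.last (m + 1) := by
  have := (lt_cnt_iff φ i).not.mp (by omega)
  rwa [not_not] at this


lemma shiftFun_eq_castSucc {x y : SimplexCategory} (φ : x ⟶ y) (j : Fin (x.len + 2))
    (h : j.1 < x.len + 1) :
    shiftFun φ j = Fin.castSucc (φ.toOrderHom ⟨j.1, h⟩) := by
  induction j using Fin.lastCases with
  | last =>
    rw [Fin.val_last] at h
    omega
  | cast i =>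
    rw [shiftFun_castSucc]
    rfl

lemma shiftFun_eq_last {x y : SimplexCategory} (φ : x ⟶ y) (j : Fin (x.len + 2))
    (h : j.1 = x.len + 1) :
    shiftFun φ j = Fin.last (y.len + 1) := by
  induction j using Fin.lastCases with
  | last => rw [shiftFun_last]
  | cast i =>
    rw [Fin.coe_castSucc] at h
    omega

lemma shiftFun_mk_eq_castSucc {c p : ℕ} (t : Fin (c + 1) →o Fin (p + 1)) (j : Fin (c + 2))
    (h : j.1 < c + 1) :
    shiftFun (SimplexCategory.Hom.mk t : SimplexCategory.mk c ⟶ SimplexCategory.mk p) j =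
      Fin.castSucc (t ⟨j.1, h⟩) :=
  shiftFun_eq_castSucc (x := SimplexCategory.mk c) (y := SimplexCategory.mk p) (SimplexCategory.Hom.mk t) j h

lemma shiftFun_mk_eq_last {c p : ℕ} (t : Fin (c + 1) →o Fin (p + 1)) (j : Fin (c + 2))
    (h : j.1 = c + 1) :
    shiftFun (SimplexCategory.Hom.mk t : SimplexCategory.mk c ⟶ SimplexCategory.mk p) j =
      Fin.last (p + 1) :=
  shiftFun_eq_last (x := SimplexCategory.mk c) (y := SimplexCategory.mk p) (SimplexCategory.Hom.mk t) j h

/-! ### Truncation and collapse -/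

/-- Truncation of `φ` to the part below the top value. -/
def trunc {k m : ℕ} (φ : Fin (k + 1) →o Fin (m + 2)) (c : ℕ) (hc : cnt φ = c + 1) :
    Fin (c + 1) →o Fin (m + 1) where
  toFun i := Fin.castPred (φ ⟨i.1, by have := cnt_le φ; omega⟩)
    (by rw [← lt_cnt_iff]; simp only; omega)
  monotone' := by
    intro i j hij
    have hij' : (⟨i.1, by have := cnt_le φ; omega⟩ : Fin (k+1)) ≤
        ⟨j.1, by have := cnt_le φ; omega⟩ := hij
    exact φ.monotone hij'

/-- Collapse of the source onto `Fin (c + 2)`. -/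
def collapse {k m : ℕ} (φ : Fin (k + 1) →o Fin (m + 2)) (c : ℕ) (_hc : cnt φ = c + 1) :
    Fin (k + 1) →o Fin (c + 1 + 1) where
  toFun i := ⟨min i.1 (c + 1), by omega⟩
  monotone' := by
    intro i j hij
    simp only [Fin.mk_le_mk]
    exact min_le_min (Fin.le_def.mp hij) le_rfl

lemma trunc_castSucc_eq {k m : ℕ} (φ : Fin (k + 1) →o Fin (m + 2)) (c : ℕ) (hc : cnt φ = c + 1)
    (i : Fin (c + 1)) :
    Fin.castSucc (trunc φ c hc i) = φ ⟨i.1, by have := cnt_le φ; omega⟩ :=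
  rfl

lemma fact_pointwise {k m : ℕ} (φ : Fin (k + 1) →o Fin (m + 2)) (c : ℕ) (hc : cnt φ = c + 1)
    (i : Fin (k + 1)) :
    shiftFun (SimplexCategory.Hom.mk (trunc φ c hc) :
      SimplexCategory.mk c ⟶ SimplexCategory.mk m) (collapse φ c hc i) = φ i := by
  by_cases hi : i.1 < cnt φ
  · rw [shiftFun_mk_eq_castSucc _ _ (show ((collapse φ c hc i : Fin (c + 1 + 1)) : ℕ) < c + 1 by
      show min i.1 (c + 1) < c + 1
      omega)]
    rw [trunc_castSucc_eq]
    congr 1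
    apply Fin.ext
    show min i.1 (c + 1) = i.1
    omega
  · rw [shiftFun_mk_eq_last _ _ (show ((collapse φ c hc i : Fin (c + 1 + 1)) : ℕ) = c + 1 by
      show min i.1 (c + 1) = c + 1
      omega)]
    exact (eq_last_of_cnt (by omega)).symm

lemma horn_exists_missed {k m : ℕ} {φ : Fin (k + 1) →o Fin (m + 2)}
    (hβ : Set.range φ ∪ {Fin.last (m + 1)} ≠ Set.univ) :
    ∃ j : Fin (m + 1), ∀ i, φ i ≠ Fin.castSucc j := by
  have := Set.ne_univ_iff_exists_notMem _ |>.mp hβ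
  obtain ⟨x, hx⟩ := this
  simp only [Set.mem_union, Set.mem_range, Set.mem_singleton_iff, not_or, not_exists] at hx
  refine ⟨x.castPred hx.2, fun i hi => hx.1 i ?_⟩
  rw [hi, Fin.castSucc_castPred]

lemma trunc_not_surj {k m : ℕ} {φ : Fin (k + 1) →o Fin (m + 2)} (c : ℕ) (hc : cnt φ = c + 1)
    (hβ : Set.range φ ∪ {Fin.last (m + 1)} ≠ Set.univ) :
    ¬ Function.Surjective (trunc φ c hc) := by
  obtain ⟨j, hj⟩ := horn_exists_missed hβ
  intro hs
  obtain ⟨i, hi⟩ := hs j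
  apply hj ⟨i.1, by have := cnt_le φ; omega⟩
  rw [← trunc_castSucc_eq φ c hc i, hi]

/-! ### Compatibility with composition -/

/-- The induced map on truncation indices. -/
def bar {l k m : ℕ} (θ : Fin (l + 1) →o Fin (k + 1)) (φ : Fin (k + 1) →o Fin (m + 2))
    (c d : ℕ) (hc : cnt φ = c + 1) (hd : cnt (φ.comp θ) = d + 1) :
    Fin (d + 1) →o Fin (c + 1) where
  toFun i := ⟨(θ ⟨i.1, by have := cnt_le (φ.comp θ); omega⟩).1, by
    have h1 : ((⟨i.1, by have := cnt_le (φ.comp θ); omega⟩ : Fin (l + 1)) : ℕ) <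
        cnt (φ.comp θ) := by
      show i.1 < cnt (φ.comp θ); omega
    rw [lt_cnt_iff] at h1
    have h2 := (lt_cnt_iff φ (θ ⟨i.1, by have := cnt_le (φ.comp θ); omega⟩)).mpr h1
    omega⟩
  monotone' := by
    intro i j hij
    simp only [Fin.mk_le_mk]
    exact θ.monotone hij

lemma trunc_comp {l k m : ℕ} (θ : Fin (l + 1) →o Fin (k + 1)) (φ : Fin (k + 1) →o Fin (m + 2))
    (c d : ℕ) (hc : cnt φ = c + 1) (hd : cnt (φ.comp θ) = d + 1) :
    trunc (φ.comp θ) d hd = (trunc φ c hc).comp (bar θ φ c d hc hd) :=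
  rfl

lemma collapse_comp {l k m : ℕ} (θ : Fin (l + 1) →o Fin (k + 1)) (φ : Fin (k + 1) →o Fin (m + 2))
    (c d : ℕ) (hc : cnt φ = c + 1) (hd : cnt (φ.comp θ) = d + 1) (i : Fin (l + 1)) :
    shiftFun (SimplexCategory.Hom.mk (bar θ φ c d hc hd) :
      SimplexCategory.mk d ⟶ SimplexCategory.mk c)
      (collapse (φ.comp θ) d hd i) = collapse φ c hc (θ i) := by
  by_cases hi : i.1 < cnt (φ.comp θ)
  · have h1 : (θ i).1 < cnt φ := by
      rw [lt_cnt_iff]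
      rw [lt_cnt_iff] at hi
      exact hi
    rw [shiftFun_mk_eq_castSucc _ _
      (show ((collapse (φ.comp θ) d hd i : Fin (d + 1 + 1)) : ℕ) < d + 1 by
        show min i.1 (d + 1) < d + 1; omega)]
    apply Fin.ext
    have he : ∀ (p : min i.1 (d+1) < l + 1), (⟨min i.1 (d + 1), p⟩ : Fin (l + 1)) = i := by
      intro p
      apply Fin.ext
      show min i.1 (d + 1) = i.1
      omega
    show (θ ⟨min i.1 (d + 1), _⟩).1 = min (θ i).1 (c + 1)
    have h3 := congrArg (fun j => (θ j).1) (he (by omega))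
    omega
  · have h1 : ¬ (θ i).1 < cnt φ := by
      intro hlt
      rw [lt_cnt_iff] at hlt
      exact hlt (by
        have := (lt_cnt_iff (φ.comp θ) i).not.mp hi
        rw [not_not] at this
        exact this)
    rw [shiftFun_mk_eq_last _ _
      (show ((collapse (φ.comp θ) d hd i : Fin (d + 1 + 1)) : ℕ) = d + 1 by
        show min i.1 (d + 1) = d + 1; omega)]
    apply Fin.ext
    show (c + 1 : ℕ) = min (θ i).1 (c + 1)
    omega

end DecProof
namespace DecProof
open DecShift SSet SimplexCategory Opposite

section Lift

/-- Helper: a morphism of `SimplexCategory` between `mk` objects. -/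
def mkHom {k p : ℕ} (t : Fin (k + 1) →o Fin (p + 1)) :
    SimplexCategory.mk k ⟶ SimplexCategory.mk p :=
  SimplexCategory.Hom.mk t

/-- Helper: a morphism of `SimplexCategory` out of an opposite-side object. -/
def mkHom' {p : ℕ} {a : SimplexCategoryᵒᵖ} (t : Fin (a.unop.len + 1) →o Fin (p + 1)) :
    a.unop ⟶ SimplexCategory.mk p :=
  SimplexCategory.Hom.mk t

lemma mkHom'_toOrderHom {p : ℕ} {a : SimplexCategoryᵒᵖ}
    (t : Fin (a.unop.len + 1) →o Fin (p + 1)) :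
    (mkHom' (a := a) t).toOrderHom = t := rfl

lemma mkHom_toOrderHom {k p : ℕ} (t : Fin (k + 1) →o Fin (p + 1)) :
    (mkHom t).toOrderHom = t := rfl

variable {m : ℕ} {X : SSet.{0}}

/-- The basic lifting construction: from a map `(∂Δ[m] : SSet) ⟶ Dec₊ X` and a base vertex,
produce the value on a simplex of the horn `Λ[m+1, last]`. -/
noncomputable def liftSimp (w : (∂Δ[m] : SSet) ⟶ dec.obj X) (x₀ : X.obj (op (SimplexCategory.mk 0)))
    {a : SimplexCategoryᵒᵖ} (β : (horn (m + 1) (Fin.last (m + 1)) : SSet).obj a) : X.obj a :=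
  if hc : 0 < cnt (stdSimplex.asOrderHom β.1) then
    X.map (Quiver.Hom.op (mkHom'
        (collapse (stdSimplex.asOrderHom β.1) (cnt (stdSimplex.asOrderHom β.1) - 1)
          (Nat.succ_pred_eq_of_pos hc).symm)))
      (w.app (op (SimplexCategory.mk (cnt (stdSimplex.asOrderHom β.1) - 1)))
        ⟨ULift.up (mkHom
            (trunc (stdSimplex.asOrderHom β.1) (cnt (stdSimplex.asOrderHom β.1) - 1)
              (Nat.succ_pred_eq_of_pos hc).symm)),
          trunc_not_surj (cnt (stdSimplex.asOrderHom β.1) - 1)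
            (Nat.succ_pred_eq_of_pos hc).symm β.2⟩)
  else
    X.map (SimplexCategory.const a.unop (SimplexCategory.mk 0) 0).op x₀

lemma liftSimp_pos (w : (∂Δ[m] : SSet) ⟶ dec.obj X) (x₀ : X.obj (op (SimplexCategory.mk 0)))
    {a : SimplexCategoryᵒᵖ} (β : (horn (m + 1) (Fin.last (m + 1)) : SSet).obj a)
    (ξ : Fin (a.unop.len + 1) →o Fin (m + 2)) (hξ : stdSimplex.asOrderHom β.1 = ξ)
    (c : ℕ) (hc : cnt ξ = c + 1) :
    liftSimp w x₀ β = X.map (Quiver.Hom.op (mkHom' (collapse ξ c hc)))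
      (w.app (op (SimplexCategory.mk c))
        ⟨ULift.up (mkHom (trunc ξ c hc)),
          trunc_not_surj c hc (hξ ▸ β.2)⟩) := by
  subst hξ
  have hcc : c = cnt (stdSimplex.asOrderHom β.1) - 1 := by omega
  subst hcc
  rw [liftSimp, dif_pos (show 0 < cnt (stdSimplex.asOrderHom β.1) by omega)]

lemma liftSimp_zero (w : (∂Δ[m] : SSet) ⟶ dec.obj X) (x₀ : X.obj (op (SimplexCategory.mk 0)))
    {a : SimplexCategoryᵒᵖ} (β : (horn (m + 1) (Fin.last (m + 1)) : SSet).obj a)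
    (ξ : Fin (a.unop.len + 1) →o Fin (m + 2)) (hξ : stdSimplex.asOrderHom β.1 = ξ)
    (hc : cnt ξ = 0) :
    liftSimp w x₀ β = X.map (SimplexCategory.const a.unop (SimplexCategory.mk 0) 0).op x₀ := by
  subst hξ
  rw [liftSimp, dif_neg (by omega)]

lemma liftSimp_natural (w : (∂Δ[m] : SSet) ⟶ dec.obj X) (x₀ : X.obj (op (SimplexCategory.mk 0)))
    (hw : ∀ (b : SimplexCategoryᵒᵖ) (α : (∂Δ[m] : SSet).obj b),
      X.map (SimplexCategory.const (SimplexCategory.mk 0)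
        (SimplexCategory.mk (b.unop.len + 1)) (Fin.last _)).op (w.app b α) = x₀)
    {a b : SimplexCategoryᵒᵖ} (ψ : a ⟶ b) (β : (horn (m + 1) (Fin.last (m + 1)) : SSet).obj a) :
    liftSimp w x₀ ((horn (m + 1) (Fin.last (m + 1)) : SSet).map ψ β) =
      X.map ψ (liftSimp w x₀ β) := by
  set φ : Fin (a.unop.len + 1) →o Fin (m + 2) := stdSimplex.asOrderHom β.1 with hφ
  set θ : Fin (b.unop.len + 1) →o Fin (a.unop.len + 1) := ψ.unop.toOrderHom with hθ
  have hcomp : stdSimplex.asOrderHom ((horn (m + 1) (Fin.last (m + 1)) : SSet).map ψ β).1 = φ.comp θ := rfl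
  rcases Nat.eq_zero_or_eq_succ_pred (cnt φ) with hcφ | hcφ'
  · -- `cnt φ = 0` : everything is concentrated at the last vertex
    have hcψ : cnt (φ.comp θ) = 0 := by
      by_contra h
      have h0 := (lt_cnt_iff (φ.comp θ) ⟨0, by omega⟩).mp
        (by show (0 : ℕ) < cnt (φ.comp θ); omega)
      exact h0 (eq_last_of_cnt (φ := φ) (i := θ ⟨0, by omega⟩) (by omega))
    rw [liftSimp_zero w x₀ _ _ hcomp hcψ, liftSimp_zero w x₀ β φ rfl hcφ,
      ← Functor.map_comp_apply]
    exact congrArg (fun (t : op (SimplexCategory.mk 0) ⟶ b) => X.map t x₀)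
      (congrArg Quiver.Hom.op (to0_unique _ _))
  · obtain ⟨c, hcφ⟩ : ∃ c, cnt φ = c + 1 := ⟨cnt φ - 1, hcφ'⟩
    rcases Nat.eq_zero_or_eq_succ_pred (cnt (φ.comp θ)) with hcψ | hcψ'
    · -- the composite is concentrated at the last vertex
      erw [liftSimp_zero w x₀ _ _ hcomp hcψ, liftSimp_pos w x₀ β φ rfl c hcφ,
        ← Functor.map_comp_apply]
      have hfac : Quiver.Hom.op (mkHom' (collapse φ c hcφ)) ≫ ψ =
          Quiver.Hom.op ((SimplexCategory.const b.unop (SimplexCategory.mk 0) 0) ≫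
            SimplexCategory.const (SimplexCategory.mk 0)
              (SimplexCategory.mk (c + 1)) (Fin.last (c + 1))) := by
        apply congrArg Quiver.Hom.op
        show ψ.unop ≫ mkHom' (collapse φ c hcφ) = _
        rw [← const_fac_thru_zero]
        apply SimplexCategory.Hom.ext
        apply OrderHom.ext
        funext i
        show collapse φ c hcφ (θ i) = Fin.last (c + 1)
        apply Fin.ext
        show min (θ i).1 (c + 1) = c + 1
        have : ¬ ((θ i) : ℕ) < cnt φ := by
          rw [lt_cnt_iff, not_not]
          have := (lt_cnt_iff (φ.comp θ) i).not.mp (by omega)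
          rw [not_not] at this
          exact this
        omega
      erw [hfac, op_comp, Functor.map_comp_apply]
      exact congrArg (X.map (Quiver.Hom.op
        (SimplexCategory.const b.unop (SimplexCategory.mk 0) 0)))
        (hw (op (SimplexCategory.mk c)) _).symm
    · obtain ⟨d, hcψ⟩ : ∃ d, cnt (φ.comp θ) = d + 1 := ⟨cnt (φ.comp θ) - 1, hcψ'⟩
      rw [liftSimp_pos w x₀ _ _ hcomp d hcψ, liftSimp_pos w x₀ β φ rfl c hcφ]
      have hT : ((∂Δ[m] : SSet).map (Quiver.Hom.op (mkHom (bar θ φ c d hcφ hcψ)))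
          ⟨ULift.up (mkHom (trunc φ c hcφ)),
            trunc_not_surj c hcφ β.2⟩ :
          (∂Δ[m] : SSet).obj (op (SimplexCategory.mk d))) =
          ⟨ULift.up (mkHom (trunc (φ.comp θ) d hcψ)),
            trunc_not_surj d hcψ (hcomp ▸ ((horn (m + 1) (Fin.last (m + 1)) : SSet).map ψ β).2)⟩ := by
        apply Subtype.ext
        show Δ[m].map _ _ = _
        rw [stdSimplex.map_apply]
        apply congrArg (stdSimplex.objEquiv).symm
        apply SimplexCategory.Hom.ext
        apply OrderHom.ext
        funext i
        show (trunc φ c hcφ) ((bar θ φ c d hcφ hcψ) i) = trunc (φ.comp θ) d hcψ i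
        rw [trunc_comp θ φ c d hcφ hcψ]
        rfl
      erw [← hT, NatTrans.naturality_apply]
      have hdec : ((dec.obj X).map (Quiver.Hom.op (mkHom (bar θ φ c d hcφ hcψ))) :
          (dec.obj X).obj (op (SimplexCategory.mk c)) →
            (dec.obj X).obj (op (SimplexCategory.mk d))) =
          X.map (Quiver.Hom.op (shiftF.map (mkHom (bar θ φ c d hcφ hcψ)))) := rfl
      rw [hdec]
      erw [← Functor.map_comp_apply, ← Functor.map_comp_apply]
      apply congrArg (fun (t : op (SimplexCategory.mk (c + 1)) ⟶ b) =>
        X.map t (w.app (op (SimplexCategory.mk c)) ⟨ULift.up (mkHom (trunc φ c hcφ)),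
          trunc_not_surj c hcφ β.2⟩))
      show Quiver.Hom.op (mkHom' (collapse (φ.comp θ) d hcψ) ≫
          shiftF.map (mkHom (bar θ φ c d hcφ hcψ))) =
        Quiver.Hom.op (ψ.unop ≫ mkHom' (collapse φ c hcφ))
      apply congrArg Quiver.Hom.op
      apply SimplexCategory.Hom.ext
      apply OrderHom.ext
      funext i
      show shiftFun (mkHom (bar θ φ c d hcφ hcψ))
          ((collapse (φ.comp θ) d hcψ) i) = collapse φ c hcφ (θ i)
      exact collapse_comp θ φ c d hcφ hcψ i

end Lift

end DecProof
namespace DecProof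
open DecShift SSet SimplexCategory Opposite

section LiftTwo

variable {m : ℕ} {X : SSet.{0}}

/-- The natural transformation `Λ[m+1, last] ⟶ X` defined by `liftSimp`. -/
noncomputable def liftHorn (w : (∂Δ[m] : SSet) ⟶ dec.obj X) (x₀ : X.obj (op (SimplexCategory.mk 0)))
    (hw : ∀ (b : SimplexCategoryᵒᵖ) (α : (∂Δ[m] : SSet).obj b),
      X.map (SimplexCategory.const (SimplexCategory.mk 0)
        (SimplexCategory.mk (b.unop.len + 1)) (Fin.last _)).op (w.app b α) = x₀) :
    (Λ[m + 1, Fin.last (m + 1)] : SSet) ⟶ X where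
  app a := TypeCat.ofHom (fun β => liftSimp w x₀ β)
  naturality a b ψ := by
    ext β
    exact liftSimp_natural w x₀ hw ψ β

lemma shiftFun_ne {x y : SimplexCategory} (f : x ⟶ y) (j : Fin (y.len + 1))
    (hj : ∀ i, f.toOrderHom i ≠ j) (i : Fin (x.len + 2)) :
    shiftFun f i ≠ Fin.castSucc j := by
  induction i using Fin.lastCases with
  | last =>
    rw [shiftFun_last]
    exact (Fin.ne_last_of_lt (Fin.castSucc_lt_last j)).symm
  | cast i =>
    rw [shiftFun_castSucc]
    intro h
    exact hj i (Fin.castSucc_injective _ h)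

/-- The shift of a boundary simplex, as a horn simplex. -/
def shiftedSimp {a : SimplexCategoryᵒᵖ} (α : (∂Δ[m] : SSet).obj a) :
    (Λ[m + 1, Fin.last (m + 1)] : SSet).obj (op (shiftF.obj a.unop)) := by
  refine ⟨ULift.up (shiftF.map α.1.down), ?_⟩
  obtain ⟨j, hj⟩ := not_forall.mp α.2
  change Set.range (stdSimplex.asOrderHom _) ∪ {Fin.last (m + 1)} ≠ Set.univ; rw [Set.ne_univ_iff_exists_notMem]
  refine ⟨Fin.castSucc j, ?_⟩
  intro hmem
  rcases hmem with hmem | hmem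
  · obtain ⟨i, hi⟩ := hmem
    exact shiftFun_ne α.1.down j (fun i' hi' => hj ⟨i', hi'⟩) i hi
  · rw [Set.mem_singleton_iff] at hmem
    exact (Fin.ne_last_of_lt (Fin.castSucc_lt_last j)) hmem

lemma cnt_eq_of {k m : ℕ} (φ : Fin (k + 1) →o Fin (m + 2)) (t : ℕ) (ht : t ≤ k + 1)
    (h : ∀ i : Fin (k + 1), φ i ≠ Fin.last (m + 1) ↔ i.1 < t) : cnt φ = t := by
  by_contra hne
  rcases Nat.lt_or_ge (cnt φ) t with hlt | hge
  · have h1 : φ ⟨cnt φ, by omega⟩ ≠ Fin.last (m + 1) :=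
      (h ⟨cnt φ, by omega⟩).mpr (by show cnt φ < t; omega)
    exact h1 (eq_last_of_cnt (by show cnt φ ≤ cnt φ; omega))
  · have hgt : t < cnt φ := by omega
    have h1 : ((⟨t, by have := cnt_le φ; omega⟩ : Fin (k + 1)) : ℕ) < cnt φ := by
      show t < cnt φ; omega
    rw [lt_cnt_iff] at h1
    have h2 := (h _).mp h1
    have h3 : t < t := h2
    omega

lemma cnt_shifted {a : SimplexCategoryᵒᵖ} (α : (∂Δ[m] : SSet).obj a) :
    cnt (stdSimplex.asOrderHom (shiftedSimp α).1) = a.unop.len + 1 := by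
  have hlen : (unop (op (shiftF.obj (unop a)))).len = a.unop.len + 1 := rfl
  apply cnt_eq_of _ _ (by omega)
  intro i
  constructor
  · intro hne
    by_contra hlt
    have hi : i = Fin.last (a.unop.len + 1) := Fin.ext (by
      have h2 : i.1 < a.unop.len + 2 := i.isLt
      rw [Fin.val_last]
      omega)
    apply hne
    show shiftFun α.1.down i = Fin.last (m + 1)
    rw [hi]
    exact shiftFun_last α.1.down
  · intro hlt
    have hi : i = Fin.castSucc ⟨i.1, hlt⟩ := Fin.ext rfl
    show shiftFun α.1.down i ≠ Fin.last (m + 1)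
    rw [hi, shiftFun_castSucc]
    exact Fin.ne_last_of_lt (Fin.castSucc_lt_last _)

lemma lift_shifted (w : (∂Δ[m] : SSet) ⟶ dec.obj X) (x₀ : X.obj (op (SimplexCategory.mk 0)))
    {a : SimplexCategoryᵒᵖ} (α : (∂Δ[m] : SSet).obj a) :
    liftSimp w x₀ (shiftedSimp α) = w.app a α := by
  rw [liftSimp_pos w x₀ (shiftedSimp α) _ rfl a.unop.len (cnt_shifted α)]
  have hkey : ∀ (T : (∂Δ[m] : SSet).obj (op (SimplexCategory.mk a.unop.len))), α = T →
      X.map (Quiver.Hom.op (mkHom' (a := op (shiftF.obj a.unop))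
        (collapse (stdSimplex.asOrderHom (shiftedSimp α).1) a.unop.len (cnt_shifted α))))
        (w.app (op (SimplexCategory.mk a.unop.len)) T) = w.app a α := by
    intro T hT
    subst hT
    have hid : mkHom' (a := op (shiftF.obj a.unop))
        (collapse (stdSimplex.asOrderHom (shiftedSimp α).1) a.unop.len (cnt_shifted α)) =
        𝟙 (SimplexCategory.mk (a.unop.len + 1)) := by
      apply SimplexCategory.Hom.ext
      apply OrderHom.ext
      funext i
      apply Fin.ext
      show min i.1 (a.unop.len + 1) = i.1
      have h2 : i.1 < a.unop.len + 2 := i.isLt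
      omega
    rw [hid]
    show X.map (𝟙 (op (SimplexCategory.mk (a.unop.len + 1)))) (w.app _ α) = w.app a α
    erw [Functor.map_id_apply]
  apply hkey
  apply Eq.symm
  apply Subtype.ext
  apply congrArg ULift.up
  apply SimplexCategory.Hom.ext
  apply OrderHom.ext
  funext i
  apply Fin.ext
  have hcast : (⟨i.1, by have h3 : i.1 < a.unop.len + 1 := i.isLt; omega⟩ : Fin (a.unop.len + 2)) =
      Fin.castSucc i := Fin.ext rfl
  show ((shiftFun α.1.down ⟨i.1, _⟩ : Fin (m + 2)) : ℕ) = (α.1.down.toOrderHom i : ℕ)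
  rw [hcast, shiftFun_castSucc]
  rfl

/-- The last vertex, as a `0`-simplex of the horn. -/
def vertexLast : (Λ[m + 1, Fin.last (m + 1)] : SSet).obj (op (SimplexCategory.mk 0)) := by
  refine ⟨ULift.up (SimplexCategory.const (SimplexCategory.mk 0)
    (SimplexCategory.mk (m + 1)) (Fin.last (m + 1))), ?_⟩
  change Set.range (stdSimplex.asOrderHom _) ∪ {Fin.last (m + 1)} ≠ Set.univ; rw [Set.ne_univ_iff_exists_notMem]
  refine ⟨Fin.castSucc 0, ?_⟩
  intro hmem
  rcases hmem with hmem | hmem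
  · obtain ⟨i, hi⟩ := hmem
    have h2 : Fin.last (m + 1) = Fin.castSucc 0 := hi
    exact (Fin.ne_last_of_lt (Fin.castSucc_lt_last 0)) h2.symm
  · rw [Set.mem_singleton_iff] at hmem
    exact (Fin.ne_last_of_lt (Fin.castSucc_lt_last 0)) hmem

lemma cnt_vertexLast : cnt (stdSimplex.asOrderHom (vertexLast (m := m)).1) = 0 := by
  apply cnt_eq_of _ _ (by omega)
  intro i
  constructor
  · intro hne
    exact absurd rfl hne
  · intro h
    omega

lemma lift_vertexLast (w : (∂Δ[m] : SSet) ⟶ dec.obj X) (x₀ : X.obj (op (SimplexCategory.mk 0))) :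
    liftSimp w x₀ vertexLast = x₀ := by
  rw [liftSimp_zero w x₀ vertexLast _ rfl cnt_vertexLast]
  rw [show SimplexCategory.const (SimplexCategory.mk 0) (SimplexCategory.mk 0) 0 =
    𝟙 (SimplexCategory.mk 0) from SimplexCategory.const_eq_id]
  show X.map (𝟙 (op (SimplexCategory.mk 0))) x₀ = x₀
  rw [Functor.map_id_apply]

/-- Yoneda-type computation: a map out of a standard simplex is determined by its
value on the generic simplex. -/
lemma map_yoneda {F : SSet.{0}} {p : ℕ} (g : Δ[p] ⟶ F) {a : SimplexCategoryᵒᵖ}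
    (β : Δ[p].obj a) :
    g.app a β = F.map β.down.op
      (g.app (op (SimplexCategory.mk p)) (ULift.up (𝟙 (SimplexCategory.mk p)))) := by
  have h := NatTrans.naturality_apply g β.down.op
    (ULift.up (𝟙 (SimplexCategory.mk p)) : Δ[p].obj (op (SimplexCategory.mk p)))
  have h2 : (Δ[p].map β.down.op (ULift.up (𝟙 (SimplexCategory.mk p)))) = β := by
    show ULift.up (β.down ≫ 𝟙 _) = β
    rw [Category.comp_id]
    rfl
  rw [h2] at h
  exact h


lemma comp_app_aux {X Y : SSet.{0}} (f : X ⟶ Y) {m : ℕ} (u : (∂Δ[m] : SSet) ⟶ dec.obj X)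
    (v₁ : Δ[m] ⟶ dec.obj Y) (huv1 : u ≫ dec.map f = (SSet.boundary m).ι ≫ v₁)
    (c : ℕ) (T : (∂Δ[m] : SSet).obj (op (SimplexCategory.mk c))) :
    f.app (op (SimplexCategory.mk (c + 1))) (u.app (op (SimplexCategory.mk c)) T) =
      Y.map (Quiver.Hom.op (shiftF.map T.1.down))
        (v₁.app (op (SimplexCategory.mk m)) (ULift.up (𝟙 (SimplexCategory.mk m)))) := by
  have h2 := congrArg (fun (t : (∂Δ[m] : SSet) ⟶ dec.obj Y) =>
    t.app (op (SimplexCategory.mk c)) T) huv1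
  refine h2.trans ?_
  exact map_yoneda v₁ T.1

end LiftTwo


end DecProof
namespace DecProof
open DecShift SSet SimplexCategory Opposite CategoryTheory.Limits

lemma surj_aux {X Y : SSet.{0}} (f : X ⟶ Y) (m : ℕ)
    (hs : Function.Surjective (relMatch f ((SSet.horn (m + 1) (Fin.last (m + 1))).ι))) :
    Function.Surjective (relMatch (decComparison₀ f) ((SSet.boundary m).ι)) := by
  rintro ⟨⟨u, v⟩, huv⟩
  have huv' : u ≫ pullback.lift (dec.map f) (rMap X) (rMap_natural f) =
      (SSet.boundary m).ι ≫ v := huv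
  have huv1 : u ≫ dec.map f =
      (SSet.boundary m).ι ≫ v ≫ pullback.fst (rMap Y) (constMap f) := by
    rw [← pullback.lift_fst (dec.map f) (rMap X) (rMap_natural f), ← Category.assoc, huv',
      Category.assoc]
  have huv2 : u ≫ rMap X =
      (SSet.boundary m).ι ≫ v ≫ pullback.snd (rMap Y) (constMap f) := by
    rw [← pullback.lift_snd (dec.map f) (rMap X) (rMap_natural f), ← Category.assoc, huv',
      Category.assoc]
  set x₀ : X.obj (op (SimplexCategory.mk 0)) :=
    (v ≫ pullback.snd (rMap Y) (constMap f)).app (op (SimplexCategory.mk m))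
      (ULift.up (𝟙 (SimplexCategory.mk m))) with hx₀
  have hv₂ : ∀ (a : SimplexCategoryᵒᵖ) (β : Δ[m].obj a),
      (v ≫ pullback.snd (rMap Y) (constMap f)).app a β = x₀ := by
    intro a β
    exact map_yoneda (v ≫ pullback.snd (rMap Y) (constMap f)) β
  have hw : ∀ (b : SimplexCategoryᵒᵖ) (α : (∂Δ[m] : SSet).obj b),
      X.map (SimplexCategory.const (SimplexCategory.mk 0)
        (SimplexCategory.mk (b.unop.len + 1)) (Fin.last _)).op (u.app b α) = x₀ := by
    intro b α
    have h1 := congrArg (fun (t : (∂Δ[m] : SSet) ⟶ constAt X) => t.app b α) huv2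
    exact h1.trans (hv₂ b α.1)
  set y := (v ≫ pullback.fst (rMap Y) (constMap f)).app (op (SimplexCategory.mk m))
    (ULift.up (𝟙 (SimplexCategory.mk m))) with hy
  set v' := (SSet.yonedaEquiv (X := Y) (n := SimplexCategory.mk (m + 1))).symm
    (y : Y.obj (op (SimplexCategory.mk (m + 1)))) with hv'
  have hcond : liftHorn u x₀ hw ≫ f = (SSet.horn (m + 1) (Fin.last (m + 1))).ι ≫ v' := by
    apply SSet.hom_ext
    intro a
    ext β
    show f.app a (liftSimp u x₀ β) = Y.map β.1.down.op y
    rcases Nat.eq_zero_or_pos (cnt (stdSimplex.asOrderHom β.1)) with h0 | hpos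
    · rw [liftSimp_zero u x₀ β _ rfl h0]
      rw [NatTrans.naturality_apply f
        (Quiver.Hom.op (SimplexCategory.const a.unop (SimplexCategory.mk 0) 0)) x₀]
      have hfx : f.app (op (SimplexCategory.mk 0)) x₀ =
          Y.map (Quiver.Hom.op (SimplexCategory.const (SimplexCategory.mk 0)
            (SimplexCategory.mk (m + 1)) (Fin.last (m + 1)))) y :=
        (congrArg (fun (t : pullback (rMap Y) (constMap f) ⟶ constAt Y) =>
          (v ≫ t).app (op (SimplexCategory.mk m))
            (ULift.up (𝟙 (SimplexCategory.mk m)))) pullback.condition).symm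
      erw [hfx, ← Functor.map_comp_apply]
      have hβd : β.1.down = SimplexCategory.const a.unop
          (SimplexCategory.mk (m + 1)) (Fin.last (m + 1)) := by
        apply SimplexCategory.Hom.ext
        apply OrderHom.ext
        funext i
        exact eq_last_of_cnt (le_trans (le_of_eq h0) (Nat.zero_le _))
      rw [hβd]
      apply congrArg (fun (t : a.unop ⟶ SimplexCategory.mk (m + 1)) => Y.map (Quiver.Hom.op t) y)
      apply SimplexCategory.Hom.ext
      apply OrderHom.ext
      funext i
      rfl
    · obtain ⟨c, hc⟩ : ∃ c, cnt (stdSimplex.asOrderHom β.1) = c + 1 := ⟨cnt (stdSimplex.asOrderHom β.1) - 1, by omega⟩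
      rw [liftSimp_pos u x₀ β _ rfl c hc]
      refine Eq.trans (NatTrans.naturality_apply f _ _) ?_
      erw [comp_app_aux f u (v ≫ pullback.fst (rMap Y) (constMap f)) huv1 c]
      erw [← Functor.map_comp_apply]
      have hfac2 : mkHom' (collapse (stdSimplex.asOrderHom β.1) c hc) ≫
          shiftF.map (mkHom (trunc (stdSimplex.asOrderHom β.1) c hc)) = β.1.down := by
        apply SimplexCategory.Hom.ext
        apply OrderHom.ext
        funext i
        show shiftFun (mkHom (trunc (stdSimplex.asOrderHom β.1) c hc))
          ((collapse (stdSimplex.asOrderHom β.1) c hc) i) = stdSimplex.asOrderHom β.1 i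
        exact fact_pointwise (stdSimplex.asOrderHom β.1) c hc i
      rw [← hfac2]
      rfl
  obtain ⟨h, hh⟩ := hs ⟨(liftHorn u x₀ hw, v'), hcond⟩
  have h1 : (SSet.horn (m + 1) (Fin.last (m + 1))).ι ≫ h = liftHorn u x₀ hw :=
    congrArg (fun t => t.1.1) hh
  have h2 : h ≫ f = v' := congrArg (fun t => t.1.2) hh
  set xel := h.app (op (SimplexCategory.mk (m + 1)))
    (ULift.up (𝟙 (SimplexCategory.mk (m + 1)))) with hxel
  set g := (SSet.yonedaEquiv (X := (dec.obj X)) (n := SimplexCategory.mk m)).symm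
    (xel : (dec.obj X).obj (op (SimplexCategory.mk m))) with hg
  refine ⟨g, ?_⟩
  apply Subtype.ext
  have hA : (SSet.boundary m).ι ≫ g = u := by
    apply SSet.hom_ext
    intro a
    ext α
    show g.app a α.1 = u.app a α
    exact ((map_yoneda h (ULift.up (shiftF.map α.1.down))).symm.trans
      (congrArg (fun t => t.app (op (shiftF.obj a.unop)) (shiftedSimp α)) h1)).trans
      (lift_shifted u x₀ α)
  have hB : g ≫ decComparison₀ f = v := by
    apply pullback.hom_ext
    · rw [Category.assoc,
        show decComparison₀ f ≫ pullback.fst (rMap Y) (constMap f) = dec.map f from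
          pullback.lift_fst _ _ _]
      apply SSet.hom_ext
      intro a
      ext β
      show (dec.map f).app a (g.app a β) = (v ≫ pullback.fst (rMap Y) (constMap f)).app a β
      have hfx2 : f.app (op (SimplexCategory.mk (m + 1))) xel = y := by
        have h3 := congrArg (fun (t : Δ[m + 1] ⟶ Y) =>
          t.app (op (SimplexCategory.mk (m + 1)))
            (ULift.up (𝟙 (SimplexCategory.mk (m + 1))))) h2
        refine h3.trans ?_
        show Y.map (𝟙 (op (SimplexCategory.mk (m + 1)))) y = y
        erw [Functor.map_id_apply]
      exact ((NatTrans.naturality_apply f (Quiver.Hom.op (shiftF.map β.down)) xel).trans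
        (congrArg (fun t => Y.map (Quiver.Hom.op (shiftF.map β.down)) t) hfx2)).trans
        (map_yoneda (v ≫ pullback.fst (rMap Y) (constMap f)) β).symm
    · rw [Category.assoc,
        show decComparison₀ f ≫ pullback.snd (rMap Y) (constMap f) = rMap X from
          pullback.lift_snd _ _ _]
      apply SSet.hom_ext
      intro a
      ext β
      show (rMap X).app a (g.app a β) = (v ≫ pullback.snd (rMap Y) (constMap f)).app a β
      refine Eq.trans ?_ (hv₂ a β).symm
      have hcls : (SimplexCategory.const (SimplexCategory.mk 0)
          (SimplexCategory.mk (a.unop.len + 1)) (Fin.last _) ≫ shiftF.map β.down) =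
          SimplexCategory.const (SimplexCategory.mk 0)
            (SimplexCategory.mk (m + 1)) (Fin.last (m + 1)) := by
        apply SimplexCategory.Hom.ext
        apply OrderHom.ext
        funext i
        show shiftFun β.down (Fin.last (a.unop.len + 1)) = Fin.last (m + 1)
        exact shiftFun_last β.down
      exact ((((X.map_comp_apply (shiftF.map β.down).op (SimplexCategory.const
          (SimplexCategory.mk 0) (SimplexCategory.mk (a.unop.len + 1)) (Fin.last _)).op xel).symm.trans
        (congrArg (fun t => X.map (Quiver.Hom.op t) xel) hcls)).trans
        (map_yoneda h (a := op (SimplexCategory.mk 0)) (ULift.up (SimplexCategory.const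
          (SimplexCategory.mk 0) (SimplexCategory.mk (m + 1)) (Fin.last (m + 1))))).symm).trans
        (congrArg (fun t => t.app (op (SimplexCategory.mk 0)) vertexLast) h1)).trans
        (lift_vertexLast u x₀)
  show ((SSet.boundary m).ι ≫ g, g ≫ decComparison₀ f) = (u, v)
  rw [hA, hB]

lemma inj_aux {X Y : SSet.{0}} (f : X ⟶ Y) (m : ℕ)
    (hi : Function.Injective (relMatch f ((SSet.horn (m + 1) (Fin.last (m + 1))).ι))) :
    Function.Injective (relMatch (decComparison₀ f) ((SSet.boundary m).ι)) := by
  intro g₁ g₂ hg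
  have E1 : (SSet.boundary m).ι ≫ g₁ = (SSet.boundary m).ι ≫ g₂ :=
    congrArg (fun t => t.1.1) hg
  have E2 : g₁ ≫ decComparison₀ f = g₂ ≫ decComparison₀ f :=
    congrArg (fun t => t.1.2) hg
  set xel₁ : X.obj (op (SimplexCategory.mk (m + 1))) :=
    (g₁.app (op (SimplexCategory.mk m)) (ULift.up (𝟙 (SimplexCategory.mk m))) :
      (dec.obj X).obj (op (SimplexCategory.mk m))) with hxel₁
  set xel₂ : X.obj (op (SimplexCategory.mk (m + 1))) :=
    (g₂.app (op (SimplexCategory.mk m)) (ULift.up (𝟙 (SimplexCategory.mk m))) :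
      (dec.obj X).obj (op (SimplexCategory.mk m))) with hxel₂
  have hsndr : ∀ gg : Δ[m] ⟶ dec.obj X, gg ≫ rMap X =
      (gg ≫ decComparison₀ f) ≫ pullback.snd (rMap Y) (constMap f) := by
    intro gg
    rw [Category.assoc, show decComparison₀ f ≫ pullback.snd (rMap Y) (constMap f) =
      rMap X from pullback.lift_snd _ _ _]
  have hkeyr : g₁ ≫ rMap X = g₂ ≫ rMap X := by
    rw [hsndr g₁, hsndr g₂, E2]
  have hfstr : ∀ gg : Δ[m] ⟶ dec.obj X, gg ≫ dec.map f =
      (gg ≫ decComparison₀ f) ≫ pullback.fst (rMap Y) (constMap f) := by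
    intro gg
    rw [Category.assoc, show decComparison₀ f ≫ pullback.fst (rMap Y) (constMap f) =
      dec.map f from pullback.lift_fst _ _ _]
  have hkeyf : g₁ ≫ dec.map f = g₂ ≫ dec.map f := by
    rw [hfstr g₁, hfstr g₂, E2]
  have hmain : relMatch f ((SSet.horn (m + 1) (Fin.last (m + 1))).ι)
        ((SSet.yonedaEquiv (X := X) (n := SimplexCategory.mk (m + 1))).symm xel₁) =
      relMatch f ((SSet.horn (m + 1) (Fin.last (m + 1))).ι)
        ((SSet.yonedaEquiv (X := X) (n := SimplexCategory.mk (m + 1))).symm xel₂) := by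
    apply Subtype.ext
    have hC : (SSet.horn (m + 1) (Fin.last (m + 1))).ι ≫
        (SSet.yonedaEquiv (X := X) (n := SimplexCategory.mk (m + 1))).symm xel₁ =
        (SSet.horn (m + 1) (Fin.last (m + 1))).ι ≫
        (SSet.yonedaEquiv (X := X) (n := SimplexCategory.mk (m + 1))).symm xel₂ := by
      apply SSet.hom_ext
      intro a
      ext β
      show X.map β.1.down.op xel₁ = X.map β.1.down.op xel₂
      rcases Nat.eq_zero_or_pos (cnt (stdSimplex.asOrderHom β.1)) with h0 | hpos
      · have hβd : β.1.down = SimplexCategory.const a.unop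
            (SimplexCategory.mk (m + 1)) (Fin.last (m + 1)) := by
          apply SimplexCategory.Hom.ext
          apply OrderHom.ext
          funext i
          exact eq_last_of_cnt (le_trans (le_of_eq h0) (Nat.zero_le _))
        have hsplit : ∀ gg : Δ[m] ⟶ dec.obj X,
            X.map (Quiver.Hom.op (SimplexCategory.const a.unop
              (SimplexCategory.mk (m + 1)) (Fin.last (m + 1))))
              ((gg.app (op (SimplexCategory.mk m)) (ULift.up (𝟙 (SimplexCategory.mk m))) :
                (dec.obj X).obj (op (SimplexCategory.mk m))) :
                  X.obj (op (SimplexCategory.mk (m + 1)))) =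
            X.map (Quiver.Hom.op (SimplexCategory.const a.unop (SimplexCategory.mk 0) 0))
              ((gg ≫ rMap X).app (op (SimplexCategory.mk m))
                (ULift.up (𝟙 (SimplexCategory.mk m)))) := by
          intro gg
          erw [const_fac_thru_zero, op_comp, Functor.map_comp_apply]
          rfl
        rw [hβd, hsplit g₁, hsplit g₂, hkeyr]
      · obtain ⟨c, hc⟩ : ∃ c, cnt (stdSimplex.asOrderHom β.1) = c + 1 :=
          ⟨cnt (stdSimplex.asOrderHom β.1) - 1, by omega⟩
        have hfac2 : mkHom' (collapse (stdSimplex.asOrderHom β.1) c hc) ≫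
            shiftF.map (mkHom (trunc (stdSimplex.asOrderHom β.1) c hc)) = β.1.down := by
          apply SimplexCategory.Hom.ext
          apply OrderHom.ext
          funext i
          show shiftFun (mkHom (trunc (stdSimplex.asOrderHom β.1) c hc))
            ((collapse (stdSimplex.asOrderHom β.1) c hc) i) = stdSimplex.asOrderHom β.1 i
          exact fact_pointwise (stdSimplex.asOrderHom β.1) c hc i
        have hstep : ∀ gg : Δ[m] ⟶ dec.obj X,
            X.map (Quiver.Hom.op (mkHom' (collapse (stdSimplex.asOrderHom β.1) c hc) ≫
              shiftF.map (mkHom (trunc (stdSimplex.asOrderHom β.1) c hc))))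
              ((gg.app (op (SimplexCategory.mk m)) (ULift.up (𝟙 (SimplexCategory.mk m))) :
                (dec.obj X).obj (op (SimplexCategory.mk m))) :
                  X.obj (op (SimplexCategory.mk (m + 1)))) =
            X.map (Quiver.Hom.op (mkHom' (collapse (stdSimplex.asOrderHom β.1) c hc)))
              (((SSet.boundary m).ι ≫ gg).app (op (SimplexCategory.mk c))
                ⟨ULift.up (mkHom (trunc (stdSimplex.asOrderHom β.1) c hc)),
                  trunc_not_surj c hc β.2⟩) := by
          intro gg
          erw [op_comp, Functor.map_comp_apply]
          apply congrArg
          exact (map_yoneda gg (ULift.up (mkHom (trunc (stdSimplex.asOrderHom β.1) c hc)))).symm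
        erw [← hfac2, hstep g₁, hstep g₂, E1]
    have hD : (SSet.yonedaEquiv (X := X) (n := SimplexCategory.mk (m + 1))).symm xel₁ ≫ f =
        (SSet.yonedaEquiv (X := X) (n := SimplexCategory.mk (m + 1))).symm xel₂ ≫ f := by
      apply SSet.hom_ext
      intro a
      ext β
      show f.app a (X.map β.down.op xel₁) = f.app a (X.map β.down.op xel₂)
      rw [NatTrans.naturality_apply f β.down.op xel₁,
        NatTrans.naturality_apply f β.down.op xel₂]
      apply congrArg
      exact congrArg (fun (t : Δ[m] ⟶ dec.obj Y) =>
        t.app (op (SimplexCategory.mk m)) (ULift.up (𝟙 (SimplexCategory.mk m)))) hkeyf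
    rw [show (relMatch f ((SSet.horn (m + 1) (Fin.last (m + 1))).ι)
        ((SSet.yonedaEquiv (X := X) (n := SimplexCategory.mk (m + 1))).symm xel₁)).1 =
        ((SSet.horn (m + 1) (Fin.last (m + 1))).ι ≫
          (SSet.yonedaEquiv (X := X) (n := SimplexCategory.mk (m + 1))).symm xel₁,
        (SSet.yonedaEquiv (X := X) (n := SimplexCategory.mk (m + 1))).symm xel₁ ≫ f) from rfl]
    rw [hC, hD]
    rfl
  have hinj := hi hmain
  have hx : xel₁ = xel₂ :=
    (SSet.yonedaEquiv (X := X) (n := SimplexCategory.mk (m + 1))).symm.injective hinj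
  have hg₁ : g₁ = (SSet.yonedaEquiv (X := (dec.obj X)) (n := SimplexCategory.mk m)).symm
      (xel₁ : (dec.obj X).obj (op (SimplexCategory.mk m))) :=
    ((SSet.yonedaEquiv (X := (dec.obj X)) (n := SimplexCategory.mk m)).symm_apply_apply g₁).symm
  have hg₂ : g₂ = (SSet.yonedaEquiv (X := (dec.obj X)) (n := SimplexCategory.mk m)).symm
      (xel₂ : (dec.obj X).obj (op (SimplexCategory.mk m))) :=
    ((SSet.yonedaEquiv (X := (dec.obj X)) (n := SimplexCategory.mk m)).symm_apply_apply g₂).symm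
  rw [hg₁, hg₂, hx]

end DecProof
/-- If `f : X → Y` is a relative `n`-dimensional hypergroupoid, then the map
`Dec₊(X) → Dec₊(Y) ×_{Y_0} X_0` (where `X_0`, `Y_0` are constant simplicial sets and
the maps `Dec₊ → (-)_0` are the retractions by iterated `0`-th faces) is a trivial
relative `n`-dimensional hypergroupoid. -/
theorem stmt14 (n : ℕ) {X Y : SSet.{0}} (f : X ⟶ Y)
    (hf : IsRelHypergroupoid n f) :
    IsTrivRelHypergroupoid n (decComparison₀ f) := by
  constructor
  · intro m
    exact DecProof.surj_aux f m (hf.1 (m + 1) (Fin.last (m + 1)))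
  · intro m hm
    exact ⟨DecProof.inj_aux f m ((hf.2 (m + 1) (Fin.last (m + 1)) (by omega)).1),
      DecProof.surj_aux f m (hf.1 (m + 1) (Fin.last (m + 1)))⟩
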